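/- Let F be a properly parametrized Markov multi-map with associated SFT Σ_M. If u∈L_n is an essential word, then for every m≥n there exists an essential word v∈L_m containing u (as a subword). -/

import Mathlib

open Set Topology

/-! ### Generic dynamical notions -/

/-- Topological transitivity of a map. -/
def TopTransitive {α : Type*} [TopologicalSpace α] (T : α → α) : Prop :=
  ∀ U V : Set α, IsOpen U → IsOpen V → U.Nonempty → V.Nonempty →
    ∃ n : ℕ, (T^[n] '' U ∩ V).Nonempty

/-- Topological mixing of a map. -/
def TopMixing {α : Type*} [TopologicalSpace α] (T : α → α) : Prop :=
  ∀ U V : Set α, IsOpen U → IsOpen V → U.Nonempty → V.Nonempty →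
    ∃ N : ℕ, ∀ n, N ≤ n → (T^[n] '' U ∩ V).Nonempty

/-- Density of the set of periodic points of a map. -/
def DensePeriodic {α : Type*} [TopologicalSpace α] (T : α → α) : Prop :=
  Dense {x : α | ∃ p : ℕ, 1 ≤ p ∧ T^[p] x = x}

/-- The metric `d(x,y) = sup_k |x_k - y_k|/(k+1)` on sequence spaces. -/
noncomputable def dseq (x y : ℕ → ℝ) : ℝ := ⨆ k : ℕ, |x k - y k| / ((k : ℝ) + 1)

/-- The specification property for a map `T` with respect to a distance function `d`. -/
def SpecProp {α : Type*} (T : α → α) (d : α → α → ℝ) : Prop :=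
  ∀ ε : ℝ, 0 < ε → ∃ N : ℕ, ∀ l : ℕ, ∀ x : Fin (l + 1) → α, ∀ a b : Fin (l + 1) → ℕ,
    (∀ k, 1 ≤ a k) → (∀ k, a k ≤ b k) →
    (∀ k : Fin l, b k.castSucc < a k.succ ∧ b k.castSucc + N ≤ a k.succ) →
    ∀ p : ℕ, b (Fin.last l) + N ≤ p →
      ∃ z : α, T^[p] z = z ∧
        ∀ k : Fin (l + 1), ∀ i : ℕ, a k ≤ i → i ≤ b k → d (T^[i] z) (T^[i] (x k)) < ε

/-- The length `ℓ` of a (possibly degenerate) interval. -/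
noncomputable def intervalLen (I : Set ℝ) : ℝ := sSup I - sInf I

/-! ### Markov multi-maps -/

/-- A Markov multi-map of the interval, given by a tuple
`(P, A₀, A₁, A₂, D, R, {f_a})` as in the paper, together with the derived data
(inverse maps `g`, interiors `D0`, `R0`, graphs `Gr`, `G0`) which are uniquely
determined by the defining equations below. -/
structure MarkovMultiMap where
  A : Type
  finA : Finite A
  A0 : Set A
  A1 : Set A
  A2 : Set A
  P : Finset ℝ
  D : A → Set ℝ
  R : A → Set ℝ
  f : A → ℝ → ℝ
  g : A → ℝ → ℝ
  D0 : A → Set ℝ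
  R0 : A → Set ℝ
  Gr : A → Set (ℝ × ℝ)
  G0 : A → Set (ℝ × ℝ)
  P_zero : (0 : ℝ) ∈ P
  P_one : (1 : ℝ) ∈ P
  P_sub : (P : Set ℝ) ⊆ Set.Icc 0 1
  A_cover : ∀ a : A, a ∈ A0 ∨ a ∈ A1 ∨ a ∈ A2
  A01 : A0 ∩ A1 = ∅
  A02 : A0 ∩ A2 = ∅
  A12 : A1 ∩ A2 = ∅
  D_A0 : ∀ a ∈ A0, ∃ p ∈ P, ∃ q ∈ P, p < q ∧ (∀ r ∈ P, ¬(p < r ∧ r < q)) ∧ D a = Set.Icc p q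
  D_A12 : ∀ a ∈ A1 ∪ A2, ∃ p ∈ P, D a = {p}
  R_A0 : ∀ a ∈ A0, ∃ u ∈ P, ∃ v ∈ P, u < v ∧ R a = Set.Icc u v
  R_A1 : ∀ a ∈ A1, ∃ u ∈ P, ∃ v ∈ P, u < v ∧ R a = Set.Icc u v ∧
    Set.Icc u v ∩ (P : Set ℝ) = {u, v}
  R_A2 : ∀ a ∈ A2, ∃ u ∈ P, R a = {u}
  f_homeo : ∀ a ∈ A0, ContinuousOn (f a) (D a) ∧ Set.BijOn (f a) (D a) (R a)
  g_A0 : ∀ a ∈ A0, (∀ x ∈ D a, g a (f a x) = x) ∧ ∀ y ∈ R a, g a y ∈ D a ∧ f a (g a y) = y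
  g_A12 : ∀ a ∈ A1 ∪ A2, ∀ y ∈ R a, g a y ∈ D a
  cover : Set.Icc (0 : ℝ) 1 = ⋃ a : A, D a
  D0_A0 : ∀ a ∈ A0, D0 a = interior (D a)
  D0_A12 : ∀ a ∈ A1 ∪ A2, D0 a = D a
  R0_A01 : ∀ a ∈ A0 ∪ A1, R0 a = interior (R a)
  R0_A2 : ∀ a ∈ A2, R0 a = R a
  Gr_A0 : ∀ a ∈ A0, Gr a = {q : ℝ × ℝ | q.1 ∈ D a ∧ q.2 = f a q.1}
  Gr_A12 : ∀ a ∈ A1 ∪ A2, Gr a = (D a) ×ˢ (R a)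
  G0_A0 : ∀ a ∈ A0, G0 a = {q : ℝ × ℝ | q.1 ∈ D0 a ∧ q.2 = f a q.1}
  G0_A1 : ∀ a ∈ A1, G0 a = (D a) ×ˢ (R0 a)
  G0_A2 : ∀ a ∈ A2, G0 a = Gr a

namespace MarkovMultiMap

variable (M : MarkovMultiMap)

/-- The graph `G(F)` of the multi-map. -/
def GF : Set (ℝ × ℝ) := ⋃ a : M.A, M.Gr a

/-- `F` is properly parametrized: the sets `G₀(a)` partition `G(F)`. -/
def ProperlyParametrized : Prop :=
  (⋃ a : M.A, M.G0 a) = M.GF ∧ ∀ a b : M.A, a ≠ b → Disjoint (M.G0 a) (M.G0 b)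

/-- The forward trajectory space `X`. -/
def X : Set (ℕ → ℝ) :=
  {x | (∀ k, x k ∈ Set.Icc (0 : ℝ) 1) ∧ ∀ k, (x k, x (k + 1)) ∈ M.GF}

/-- The left-shift map `T` on the forward trajectory space. -/
def shift : M.X → M.X :=
  fun x => ⟨fun k => x.1 (k + 1), ⟨fun k => x.2.1 (k + 1), fun k => x.2.2 (k + 1)⟩⟩

/-- The inverse trajectory (inverse limit) space `Y`, encoded by `y k = y_{-k}`. -/
def Y : Set (ℕ → ℝ) :=
  {y | (∀ k, y k ∈ Set.Icc (0 : ℝ) 1) ∧ ∀ k, (y (k + 1), y k) ∈ M.GF}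

/-- The right-shift map `S` on the inverse limit space (in the encoding `y k = y_{-k}`). -/
def ishift : M.Y → M.Y :=
  fun y => ⟨fun k => y.1 (k + 1), ⟨fun k => y.2.1 (k + 1), fun k => y.2.2 (k + 1)⟩⟩

/-- The space `X_n` of finite trajectories of length `n`. -/
def finTraj (n : ℕ) : Set (Fin n → ℝ) :=
  {x | (∀ i, x i ∈ Set.Icc (0 : ℝ) 1) ∧
    ∀ i : Fin n, ∀ h : (i : ℕ) + 1 < n, (x i, x ⟨(i : ℕ) + 1, h⟩) ∈ M.GF}

/-- The associated nearest-neighbor SFT `Σ_M`. -/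
def SFT : Set (ℕ → M.A) := {a | ∀ n : ℕ, M.D0 (a (n + 1)) ⊆ M.R0 (a n)}

/-- The word `u` (of length `n`) occurs in some point of `Z`. -/
def WordIn {n : ℕ} (u : Fin n → M.A) (Z : Set (ℕ → M.A)) : Prop :=
  ∃ z ∈ Z, ∃ m : ℕ, ∀ i : Fin n, u i = z (m + (i : ℕ))

/-- `L_n`, the words of length `n` in the language of `Σ_M`. -/
def Lang (n : ℕ) : Set (Fin n → M.A) := {u | M.WordIn u M.SFT}

/-- `(x,u)` is a labeled finite trajectory: `(x_k, x_{k+1}) ∈ G(u_k)` for all `k`. -/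
def Labeled {n : ℕ} (x : Fin (n + 1) → ℝ) (u : Fin n → M.A) : Prop :=
  ∀ i : Fin n, (x i.castSucc, x i.succ) ∈ M.Gr (u i)

/-- `(x,u)` is a special labeled finite trajectory: `(x_k, x_{k+1}) ∈ G₀(u_k)` for all `k`. -/
def SpecialLabeled {n : ℕ} (x : Fin (n + 1) → ℝ) (u : Fin n → M.A) : Prop :=
  ∀ i : Fin n, (x i.castSucc, x i.succ) ∈ M.G0 (u i)

/-- A word `u ∈ L_n` is essential if the set of finite trajectories specially labeled
by `u` is open in `X_{n+1}`. -/
def EssentialWord {n : ℕ} (u : Fin n → M.A) : Prop :=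
  u ∈ M.Lang n ∧ IsOpen {x : M.finTraj (n + 1) | M.SpecialLabeled x.1 u}

/-- A symbol is essential if it appears in some essential word. -/
def EssentialSymbol (a : M.A) : Prop :=
  ∃ n : ℕ, ∃ u : Fin n → M.A, M.EssentialWord u ∧ ∃ i : Fin n, u i = a

/-- `A^(e)`, the set of essential symbols. -/
def Ess : Set M.A := {a | M.EssentialSymbol a}

/-- `E`, the set of essential symbolic sequences. -/
def E : Set (ℕ → M.A) := {z ∈ M.SFT | ∀ i : ℕ, z i ∈ M.Ess}

/-- A word all of whose letters lie in `C`, in the language of `Σ_M`. -/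
def WordOver {n : ℕ} (u : Fin n → M.A) (C : Set M.A) : Prop :=
  u ∈ M.Lang n ∧ ∀ i, u i ∈ C

/-- There is a word of length `n+1` over `C` beginning with `a` and ending with `b`. -/
def WordFromTo (C : Set M.A) (a b : M.A) (n : ℕ) : Prop :=
  ∃ u : Fin (n + 1) → M.A, M.WordOver u C ∧ u 0 = a ∧ u (Fin.last n) = b

/-- `C ⊆ A` is irreducible. -/
def IrreducibleSet (C : Set M.A) : Prop :=
  ∀ a ∈ C, ∀ b ∈ C, ∃ n : ℕ, M.WordFromTo C a b n

/-- `C` is an irreducible component (a maximal irreducible subset of `A`). -/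
def IrreducibleComponent (C : Set M.A) : Prop :=
  M.IrreducibleSet C ∧ ∀ C' : Set M.A, M.IrreducibleSet C' → C ⊆ C' → C' = C

/-- `C ⊆ A` is mixing. -/
def MixingSet (C : Set M.A) : Prop :=
  ∃ N : ℕ, 1 ≤ N ∧ ∀ a ∈ C, ∀ b ∈ C, ∀ n : ℕ, N ≤ n + 1 → M.WordFromTo C a b n

/-- `C` is a mixing component (a maximal mixing subset of `A`). -/
def MixingComponent (C : Set M.A) : Prop :=
  M.MixingSet C ∧ ∀ C' : Set M.A, M.MixingSet C' → C ⊆ C' → C' = C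

/-- The Irreducibility Condition (IC). -/
def IC : Prop := ∃ C : Set M.A, M.IrreducibleComponent C ∧ M.Ess ⊆ C

/-- The Mixing Condition (MC). -/
def MC : Prop := ∃ C : Set M.A, M.MixingComponent C ∧ M.Ess ⊆ C

/-- `Z` is a subshift of `Σ_M`: shift-invariant and closed in the product of discrete
topologies (closedness phrased combinatorially). -/
def IsSubshift (Z : Set (ℕ → M.A)) : Prop :=
  Z ⊆ M.SFT ∧ (∀ z ∈ Z, (fun k => z (k + 1)) ∈ Z) ∧
  ∀ x : ℕ → M.A, (∀ n : ℕ, ∃ z ∈ Z, ∀ i, i < n → z i = x i) → x ∈ Z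

/-- The symbol `a` occurs in some point of `Z`. -/
def SymbolInShift (Z : Set (ℕ → M.A)) (a : M.A) : Prop := ∃ z ∈ Z, ∃ k : ℕ, z k = a

/-- `Z` is transitive on symbols. -/
def TransitiveOnSymbols (Z : Set (ℕ → M.A)) : Prop :=
  ∀ a b : M.A, M.SymbolInShift Z a → M.SymbolInShift Z b →
    ∃ z ∈ Z, ∃ m n : ℕ, z m = a ∧ z (m + n) = b

end MarkovMultiMap

/-- The composition `g_{u₀} ∘ ⋯ ∘ g_{u_n}` of inverse maps along a list of symbols. -/
def gWordList (M : MarkovMultiMap) : List M.A → ℝ → ℝ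
  | [], x => x
  | a :: l, x => M.g a (gWordList M l x)

namespace MarkovMultiMap

/-- The inverse map `g_u` associated to a word `u = u₀⋯u_n`. -/
def gWord (M : MarkovMultiMap) {n : ℕ} (u : Fin (n + 1) → M.A) : ℝ → ℝ :=
  gWordList M (List.ofFn u)

/-- The interval `I_u = g_u(R(u_n))`. -/
def Iword (M : MarkovMultiMap) {n : ℕ} (u : Fin (n + 1) → M.A) : Set ℝ :=
  M.gWord u '' M.R (u (Fin.last n))

/-- The Coding Condition (CC). -/
def CC (M : MarkovMultiMap) : Prop :=
  ∃ Z : Set (ℕ → M.A), M.IsSubshift Z ∧ M.TransitiveOnSymbols Z ∧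
    (∀ y ∈ Set.Icc (0 : ℝ) 1, ∃ a ∈ Z, ∃ x ∈ M.X, x 0 = y ∧
      ∀ i : ℕ, (x i, x (i + 1)) ∈ M.Gr (a i)) ∧
    (∀ ε : ℝ, 0 < ε → ∃ N : ℕ, ∀ n : ℕ, N ≤ n → ∀ u : Fin (n + 1) → M.A,
      M.WordIn u Z → intervalLen (M.Iword u) < ε)

/-- Uniform equicontinuity of the family `{g_u : u ∈ L(C)}`. -/
def UnifEquicontOn (M : MarkovMultiMap) (C : Set M.A) : Prop :=
  ∀ ε : ℝ, 0 < ε → ∃ δ : ℝ, 0 < δ ∧ ∀ n : ℕ, ∀ u : Fin (n + 1) → M.A, M.WordOver u C →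
    ∀ x ∈ M.R (u (Fin.last n)), ∀ y ∈ M.R (u (Fin.last n)),
      |x - y| < δ → |M.gWord u x - M.gWord u y| < ε

end MarkovMultiMap


/-! ### Auxiliary lemmas for stmt10 -/

namespace MarkovMultiMap

variable (M : MarkovMultiMap)

lemma D0_spec_A0 {a : M.A} (ha : a ∈ M.A0) :
    ∃ p ∈ M.P, ∃ q ∈ M.P, p < q ∧ (∀ r ∈ M.P, ¬(p < r ∧ r < q)) ∧
      M.D a = Set.Icc p q ∧ M.D0 a = Set.Ioo p q := by
  obtain ⟨p, hp, q, hq, hpq, hnb, hD⟩ := M.D_A0 a ha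
  exact ⟨p, hp, q, hq, hpq, hnb, hD, by rw [M.D0_A0 a ha, hD, interior_Icc]⟩

lemma notP_of_mem_D0 {a : M.A} (ha : a ∈ M.A0) {x : ℝ} (hx : x ∈ M.D0 a) :
    x ∉ (M.P : Set ℝ) := by
  obtain ⟨p, hp, q, hq, hpq, hnb, hD, hD0⟩ := M.D0_spec_A0 ha
  rw [hD0] at hx
  exact fun hxP => hnb x hxP ⟨hx.1, hx.2⟩

lemma G0_subset_Gr {a : M.A} : M.G0 a ⊆ M.Gr a := by
  rcases M.A_cover a with ha | ha | ha
  · rw [M.G0_A0 a ha, M.Gr_A0 a ha, M.D0_A0 a ha]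
    exact fun q hq => ⟨interior_subset hq.1, hq.2⟩
  · rw [M.G0_A1 a ha, M.Gr_A12 a (Or.inl ha), M.R0_A01 a (Or.inr ha)]
    exact Set.prod_mono subset_rfl interior_subset
  · rw [M.G0_A2 a ha]

lemma Gr_closed_A0 {a : M.A} (ha : a ∈ M.A0) : IsClosed (M.Gr a) := by
  obtain ⟨p, hp, q, hq, hpq, hnb, hD⟩ := M.D_A0 a ha
  have himg : M.Gr a = (fun x => (x, M.f a x)) '' M.D a := by
    rw [M.Gr_A0 a ha]
    ext ⟨x, y⟩
    constructor
    · rintro ⟨hx, hy⟩; exact ⟨x, hx, by simpa using hy.symm⟩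
    · rintro ⟨x', hx', h⟩
      simp only [Prod.mk.injEq] at h
      exact ⟨h.1 ▸ hx', by rw [← h.2, h.1]⟩
  have hc : IsCompact (M.D a) := by rw [hD]; exact isCompact_Icc
  have hcont : ContinuousOn (fun x => (x, M.f a x)) (M.D a) :=
    continuousOn_id.prodMk (M.f_homeo a ha).1
  rw [himg]
  exact (hc.image_of_continuousOn hcont).isClosed

lemma exists_open_A0 (hpp : M.ProperlyParametrized) {a : M.A} (ha : a ∈ M.A0) :
    ∃ O : Set (ℝ × ℝ), IsOpen O ∧ M.G0 a ⊆ O ∧ ∀ z ∈ M.GF, z ∈ O → z ∈ M.G0 a := by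
  classical
  haveI := M.finA
  set K : Set (ℝ × ℝ) := (((M.P : Finset ℝ) : Set ℝ) ×ˢ (Set.univ : Set ℝ)) ∪
    ⋃ b ∈ {b : M.A | b ∈ M.A0 ∧ b ≠ a}, M.Gr b with hK
  have hKclosed : IsClosed K := by
    apply IsClosed.union
    · exact (M.P.finite_toSet.isClosed).prod isClosed_univ
    · exact Set.Finite.isClosed_biUnion (Set.toFinite _) (fun b hb => M.Gr_closed_A0 hb.1)
  have hdisj : ∀ z ∈ M.G0 a, z ∉ K := by
    rintro ⟨x, y⟩ hz hzK
    have hxy : x ∈ M.D0 a ∧ y = M.f a x := by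
      have h := M.G0_A0 a ha; rw [h] at hz; exact hz
    have hxP : x ∉ (M.P : Set ℝ) := M.notP_of_mem_D0 ha hxy.1
    rcases hzK with h | h
    · exact hxP h.1
    · simp only [Set.mem_iUnion] at h
      obtain ⟨b, hb, hzb⟩ := h
      rw [M.Gr_A0 b hb.1] at hzb
      obtain ⟨p, hp, q, hq, hpq, hnb, hD, hD0⟩ := M.D0_spec_A0 hb.1
      have hx1 : x ∈ Set.Icc p q := by rw [hD] at hzb; exact hzb.1
      have hxD0b : x ∈ M.D0 b := by
        rw [hD0]
        refine ⟨hx1.1.lt_of_ne (fun h => hxP (by rw [← h]; exact hp)), ?_⟩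
        exact lt_of_le_of_ne hx1.2 (fun h => hxP (by rw [h]; exact hq))
      have hG0b : (x, y) ∈ M.G0 b := by
        rw [M.G0_A0 b hb.1]; exact ⟨hxD0b, hzb.2⟩
      exact Set.disjoint_left.mp (hpp.2 b a hb.2) hG0b hz
  refine ⟨Kᶜ, hKclosed.isOpen_compl, fun z hz => hdisj z hz, ?_⟩
  rintro z hzGF hzO
  have hz' : z ∈ ⋃ b, M.G0 b := by rw [hpp.1]; exact hzGF
  obtain ⟨b, hzb⟩ := Set.mem_iUnion.mp hz'
  by_cases hba : b = a
  · exact hba ▸ hzb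
  · exfalso; apply hzO
    rcases M.A_cover b with hb | hb | hb
    · exact Or.inr (Set.mem_biUnion ⟨hb, hba⟩ (M.G0_subset_Gr hzb))
    · obtain ⟨p, hp, hD⟩ := M.D_A12 b (Or.inl hb)
      rw [M.G0_A1 b hb] at hzb
      have h1 : z.1 ∈ (M.P : Set ℝ) := by
        have h := hzb.1; rw [hD, Set.mem_singleton_iff] at h; rw [h]; exact hp
      exact Or.inl ⟨h1, Set.mem_univ _⟩
    · obtain ⟨p, hp, hD⟩ := M.D_A12 b (Or.inr hb)
      rw [M.G0_A2 b hb, M.Gr_A12 b (Or.inr hb)] at hzb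
      have h1 : z.1 ∈ (M.P : Set ℝ) := by
        have h := hzb.1; rw [hD, Set.mem_singleton_iff] at h; rw [h]; exact hp
      exact Or.inl ⟨h1, Set.mem_univ _⟩

lemma exists_succ_A0 {a : M.A} (ha : a ∈ M.A0 ∪ M.A1) :
    ∃ b ∈ M.A0, M.D0 b ⊆ M.R0 a := by
  classical
  have hR : ∃ u ∈ M.P, ∃ v ∈ M.P, u < v ∧ M.R a = Set.Icc u v := by
    rcases ha with ha | ha
    · exact M.R_A0 a ha
    · obtain ⟨u, hu, v, hv, huv, hRa, _⟩ := M.R_A1 a ha; exact ⟨u, hu, v, hv, huv, hRa⟩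
  obtain ⟨uu, huP, vv, hvP, huv, hRa⟩ := hR
  have hR0 : M.R0 a = Set.Ioo uu vv := by rw [M.R0_A01 a ha, hRa, interior_Icc]
  set Q := M.P.filter (fun r => uu < r) with hQ
  have hvQ : vv ∈ Q := by simp [hQ, Finset.mem_filter, hvP, huv]
  have hQne : Q.Nonempty := ⟨vv, hvQ⟩
  set q := Q.min' hQne with hq
  have hqP : q ∈ M.P := (Finset.mem_filter.mp (Q.min'_mem hQne)).1
  have huq : uu < q := (Finset.mem_filter.mp (Q.min'_mem hQne)).2
  have hqv : q ≤ vv := Q.min'_le vv hvQ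
  have hno : ∀ r ∈ M.P, ¬(uu < r ∧ r < q) := by
    rintro r hr ⟨h1, h2⟩
    exact absurd (Q.min'_le r (Finset.mem_filter.mpr ⟨hr, h1⟩)) (not_le.mpr h2)
  set t := (uu + q)/2 with ht
  have ht1 : uu < t := by rw [ht]; linarith
  have ht2 : t < q := by rw [ht]; linarith
  have htI : t ∈ Set.Icc (0:ℝ) 1 := by
    have h0 : (0:ℝ) ≤ uu := (M.P_sub huP).1
    have h1 : q ≤ 1 := (M.P_sub hqP).2
    exact ⟨by linarith, by linarith⟩
  have htD : t ∈ ⋃ b : M.A, M.D b := by rw [← M.cover]; exact htI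
  obtain ⟨b, hb⟩ := Set.mem_iUnion.mp htD
  have htP : t ∉ (M.P : Set ℝ) := fun h => hno t h ⟨ht1, ht2⟩
  have hbA0 : b ∈ M.A0 := by
    rcases M.A_cover b with h | h | h
    · exact h
    · exfalso; obtain ⟨p, hp, hD⟩ := M.D_A12 b (Or.inl h)
      rw [hD, Set.mem_singleton_iff] at hb; exact htP (by rw [hb]; exact hp)
    · exfalso; obtain ⟨p, hp, hD⟩ := M.D_A12 b (Or.inr h)
      rw [hD, Set.mem_singleton_iff] at hb; exact htP (by rw [hb]; exact hp)
  obtain ⟨p, hp, q', hq', hpq', hnb, hD, hD0⟩ := M.D0_spec_A0 hbA0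
  rw [hD] at hb
  have hpt : p < t := hb.1.lt_of_ne (fun h => htP (by rw [← h]; exact hp))
  have htq : t < q' := hb.2.lt_of_ne' (fun h => htP (by rw [← h]; exact hq'))
  have hup : uu ≤ p := by
    by_contra hlt
    push_neg at hlt
    exact hnb uu huP ⟨hlt, ht1.trans htq⟩
  have hqq : q' ≤ q := by
    by_contra hlt
    push_neg at hlt
    exact hnb q hqP ⟨hpt.trans ht2, hlt⟩
  refine ⟨b, hbA0, ?_⟩
  rw [hD0, hR0]
  exact Set.Ioo_subset_Ioo hup (hqq.trans hqv)


open Classical in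
noncomputable def succA (a : M.A) : M.A :=
  if h : ∃ b ∈ M.A0, M.D0 b ⊆ M.R0 a then h.choose else a

lemma succA_spec {a : M.A} (ha : a ∈ M.A0 ∪ M.A1) :
    M.succA a ∈ M.A0 ∧ M.D0 (M.succA a) ⊆ M.R0 a := by
  have h := M.exists_succ_A0 ha
  unfold succA
  rw [dif_pos h]
  exact ⟨h.choose_spec.1, h.choose_spec.2⟩

lemma chain_spec {a : M.A} (ha : a ∈ M.A0 ∪ M.A1) : ∀ k : ℕ,
    (M.succA)^[k] a ∈ M.A0 ∪ M.A1 ∧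
      M.D0 ((M.succA)^[k+1] a) ⊆ M.R0 ((M.succA)^[k] a) := by
  intro k
  induction k with
  | zero => exact ⟨ha, by simpa using (M.succA_spec ha).2⟩
  | succ k ih =>
    have hmem : (M.succA)^[k+1] a ∈ M.A0 ∪ M.A1 := by
      rw [Function.iterate_succ_apply']
      exact Or.inl (M.succA_spec ih.1).1
    refine ⟨hmem, ?_⟩
    rw [show k+1+1 = (k+1)+1 from rfl, Function.iterate_succ_apply' M.succA (k+1)]
    exact (M.succA_spec hmem).2

lemma lang_window {ℓ : ℕ} {v : Fin (ℓ+1) → M.A} (hv : v ∈ M.Lang (ℓ+1)) :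
    ∀ k, ∀ hk : k + 1 < ℓ + 1, M.D0 (v ⟨k+1, hk⟩) ⊆ M.R0 (v ⟨k, by omega⟩) := by
  obtain ⟨z, hz, m0, hzv⟩ := hv
  intro k hk
  rw [hzv ⟨k+1, hk⟩, hzv ⟨k, by omega⟩]
  have h := hz (m0 + k)
  rwa [show m0 + k + 1 = m0 + (k+1) by omega] at h

end MarkovMultiMap

lemma snoc_mk_lt {α : Type*} {ℓ : ℕ} (v : Fin (ℓ+1) → α) (a : α) {k : ℕ}
    (hk : k < ℓ+1) (hk2 : k < ℓ+2) :
    (Fin.snoc v a : Fin (ℓ+2) → α) ⟨k, hk2⟩ = v ⟨k, hk⟩ := by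
  have h : (⟨k, hk2⟩ : Fin (ℓ+2)) = Fin.castSucc ⟨k, hk⟩ := by
    apply Fin.ext; simp
  rw [h, Fin.snoc_castSucc]

namespace MarkovMultiMap

variable (M : MarkovMultiMap)

lemma lang_snoc {ℓ : ℕ} {v : Fin (ℓ+1) → M.A} (hv : v ∈ M.Lang (ℓ+1)) (a : M.A)
    (cont : ℕ → M.A) (h0 : cont 0 = a) (ha : M.D0 a ⊆ M.R0 (v (Fin.last ℓ)))
    (hc : ∀ k, M.D0 (cont (k+1)) ⊆ M.R0 (cont k)) :
    (Fin.snoc v a : Fin (ℓ+2) → M.A) ∈ M.Lang (ℓ+2) := by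
  classical
  set z' : ℕ → M.A := fun k => if h : k < ℓ+1 then v ⟨k, h⟩ else cont (k - (ℓ+1)) with hz'
  have hz'SFT : z' ∈ M.SFT := by
    intro k
    by_cases h1 : k + 1 < ℓ + 1
    · have h2 : k < ℓ+1 := by omega
      simp only [hz', dif_pos h1, dif_pos h2]
      exact M.lang_window hv k h1
    · by_cases h2 : k < ℓ + 1
      · have hk : k = ℓ := by omega
        subst hk
        simp only [hz', dif_neg h1, dif_pos h2, Nat.sub_self, h0]
        exact ha
      · simp only [hz', dif_neg h1, dif_neg h2]
        rw [show k + 1 - (ℓ+1) = (k - (ℓ+1)) + 1 by omega]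
        exact hc _
  refine ⟨z', hz'SFT, 0, ?_⟩
  rintro ⟨iv, hiv⟩
  simp only [Nat.zero_add]
  by_cases h : iv < ℓ + 1
  · rw [snoc_mk_lt v a h hiv]
    simp only [hz', dif_pos h]
  · have hiv' : iv = ℓ + 1 := by omega
    subst hiv'
    rw [show (⟨ℓ+1, hiv⟩ : Fin (ℓ+2)) = Fin.last (ℓ+1) from rfl, Fin.snoc_last]
    simp only [hz', dif_neg h, Nat.sub_self, h0]

lemma init_mem_finTraj {ℓ : ℕ} {x : Fin (ℓ+3) → ℝ} (hx : x ∈ M.finTraj (ℓ+3)) :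
    Fin.init x ∈ M.finTraj (ℓ+2) := by
  constructor
  · intro i; exact hx.1 _
  · intro i h
    have h2 : (i : ℕ) + 1 < ℓ + 3 := by omega
    have e1 : (Fin.castSucc i : Fin (ℓ+3)) = ⟨(i : ℕ), by omega⟩ := by apply Fin.ext; simp
    have e2 : (Fin.castSucc (⟨(i:ℕ)+1, h⟩ : Fin (ℓ+2)) : Fin (ℓ+3)) = ⟨(i:ℕ)+1, h2⟩ := by
      apply Fin.ext; simp
    simp only [Fin.init, e1, e2]
    exact hx.2 ⟨(i : ℕ), by omega⟩ h2

lemma specialLabeled_snoc {ℓ : ℕ} (x : Fin (ℓ+3) → ℝ) (v : Fin (ℓ+1) → M.A) (a : M.A) :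
    M.SpecialLabeled x (Fin.snoc v a : Fin (ℓ+2) → M.A) ↔
      M.SpecialLabeled (Fin.init x) v ∧
        (x ⟨ℓ+1, by omega⟩, x ⟨ℓ+2, by omega⟩) ∈ M.G0 a := by
  have e1 : (Fin.castSucc (Fin.last (ℓ+1)) : Fin (ℓ+3)) = ⟨ℓ+1, by omega⟩ := by
    apply Fin.ext; simp
  have e2 : (Fin.succ (Fin.last (ℓ+1)) : Fin (ℓ+3)) = ⟨ℓ+2, by omega⟩ := by
    apply Fin.ext; simp
  constructor
  · intro h
    refine ⟨fun i => ?_, ?_⟩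
    · have h' := h i.castSucc
      rw [Fin.snoc_castSucc] at h'
      simpa only [Fin.init, Fin.succ_castSucc] using h'
    · have h' := h (Fin.last (ℓ+1))
      rw [Fin.snoc_last, e1, e2] at h'
      exact h'
  · rintro ⟨h1, h2⟩ i
    refine Fin.lastCases ?_ ?_ i
    · rw [Fin.snoc_last, e1, e2]
      exact h2
    · intro j
      rw [Fin.snoc_castSucc]
      have h' := h1 j
      simpa only [Fin.init, Fin.succ_castSucc] using h'


lemma essential_step (hpp : M.ProperlyParametrized) {ℓ : ℕ} {v : Fin (ℓ+1) → M.A}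
    (hv : M.EssentialWord v) :
    ∃ a : M.A, M.EssentialWord (Fin.snoc v a : Fin (ℓ+2) → M.A) := by
  classical
  haveI := M.finA
  obtain ⟨hvL, hvO⟩ := hv
  set c := v (Fin.last ℓ) with hcdef
  have hpair : ∀ x : Fin (ℓ+3) → ℝ, x ∈ M.finTraj (ℓ+3) → (x ⟨ℓ+1, by omega⟩, x ⟨ℓ+2, by omega⟩) ∈ M.GF := by
    intro x hx
    have h : ((⟨ℓ+1, by omega⟩ : Fin (ℓ+3)) : ℕ) + 1 < ℓ + 3 := by simp
    exact hx.2 ⟨ℓ+1, by omega⟩ h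
  have key : ∃ a : M.A, (Fin.snoc v a : Fin (ℓ+2) → M.A) ∈ M.Lang (ℓ+2) ∧
      ∃ O : Set (ℝ × ℝ), IsOpen O ∧
        ∀ x : Fin (ℓ+3) → ℝ, x ∈ M.finTraj (ℓ+3) → M.SpecialLabeled (Fin.init x) v →
          ((x ⟨ℓ+1, by omega⟩, x ⟨ℓ+2, by omega⟩) ∈ O ↔ (x ⟨ℓ+1, by omega⟩, x ⟨ℓ+2, by omega⟩) ∈ M.G0 a) := by
    by_cases hc2 : c ∈ M.A2
    · -- the last letter is in A₂
      obtain ⟨w, hwP, hRc⟩ := M.R_A2 c hc2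
      have hlastw : ∀ x : Fin (ℓ+3) → ℝ, M.SpecialLabeled (Fin.init x) v → x ⟨ℓ+1, by omega⟩ = w := by
        intro x hsl
        have h := hsl (Fin.last ℓ)
        rw [M.G0_A2 c hc2, M.Gr_A12 c (Or.inr hc2)] at h
        have h2 := h.2
        rw [hRc] at h2
        have e : Fin.init x (Fin.last ℓ).succ = x ⟨ℓ+1, by omega⟩ := by
          simp only [Fin.init]
          congr 1 <;> (apply Fin.ext; simp)
        rw [e] at h2
        exact h2
      by_cases hA1w : ∃ b, b ∈ M.A1 ∧ M.D b = {w}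
      · -- there is an A₁ symbol based at w : use it
        obtain ⟨b, hbA1, hDb⟩ := hA1w
        have hD0b : M.D0 b = {w} := by rw [M.D0_A12 b (Or.inl hbA1), hDb]
        have haR : M.D0 b ⊆ M.R0 c := by rw [hD0b, M.R0_A2 c hc2, hRc]
        refine ⟨b, ?_, Set.univ ×ˢ interior (M.R b), isOpen_univ.prod isOpen_interior, ?_⟩
        · exact M.lang_snoc hvL b (fun k => (M.succA)^[k] b) rfl haR
            (fun k => (M.chain_spec (Or.inr hbA1) k).2)
        · intro x hx hsl
          have hx1 : x ⟨ℓ+1, by omega⟩ = w := hlastw x hsl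
          rw [M.G0_A1 b hbA1, M.R0_A01 b (Or.inr hbA1)]
          constructor
          · rintro ⟨-, h2⟩
            exact ⟨by rw [hDb, hx1]; exact Set.mem_singleton _, h2⟩
          · rintro ⟨-, h2⟩
            exact ⟨Set.mem_univ _, h2⟩
      · -- no A₁ symbol based at w : follow the witness sequence, fiber is finite
        obtain ⟨z, hz, m0, hzv⟩ := hvL
        set d := z (m0 + (ℓ+1)) with hd
        have hvlz : v (Fin.last ℓ) = z (m0 + ℓ) := by
          rw [hzv (Fin.last ℓ)]
          congr 1
        have hdR : M.D0 d ⊆ M.R0 c := by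
          have h := hz (m0 + ℓ)
          rw [show m0 + ℓ + 1 = m0 + (ℓ+1) by omega] at h
          rw [hcdef, hvlz]
          exact h
        have hdRw : M.D0 d ⊆ {w} := by rwa [M.R0_A2 c hc2, hRc] at hdR
        have hdA2 : d ∈ M.A2 ∧ M.D d = {w} := by
          rcases M.A_cover d with h | h | h
          · exfalso
            obtain ⟨p, hp, q, hq, hpq, hnb, hD, hD0⟩ := M.D0_spec_A0 h
            have h1 : (3*p+q)/4 ∈ M.D0 d := by
              rw [hD0]; exact ⟨by linarith, by linarith⟩
            have h2 : (p+3*q)/4 ∈ M.D0 d := by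
              rw [hD0]; exact ⟨by linarith, by linarith⟩
            have e1 := hdRw h1
            have e2 := hdRw h2
            rw [Set.mem_singleton_iff] at e1 e2
            rw [← e2] at e1
            linarith
          · exfalso
            obtain ⟨p, hp, hD⟩ := M.D_A12 d (Or.inl h)
            have hD0 : M.D0 d = {p} := by rw [M.D0_A12 d (Or.inl h), hD]
            have hpw : p = w := hdRw (by rw [hD0]; exact Set.mem_singleton _)
            exact hA1w ⟨d, h, by rw [hD, hpw]⟩
          · obtain ⟨p, hp, hD⟩ := M.D_A12 d (Or.inr h)
            have hD0 : M.D0 d = {p} := by rw [M.D0_A12 d (Or.inr h), hD]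
            have hpw : p = w := hdRw (by rw [hD0]; exact Set.mem_singleton _)
            exact ⟨h, by rw [hD, hpw]⟩
        obtain ⟨hdA2', hDd⟩ := hdA2
        obtain ⟨w', hw'P, hRd⟩ := M.R_A2 d hdA2'
        set FW : Set ℝ := {y | (w, y) ∈ M.GF} with hFWdef
        have hFWfin : FW.Finite := by
          have hsub : FW ⊆ ⋃ b : M.A, {y | (w, y) ∈ M.Gr b} := by
            intro y hy
            have hy' : (w, y) ∈ ⋃ b : M.A, M.Gr b := hy
            obtain ⟨b, hb⟩ := Set.mem_iUnion.mp hy'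
            exact Set.mem_iUnion.mpr ⟨b, hb⟩
          refine Set.Finite.subset (Set.finite_iUnion ?_) hsub
          intro b
          rcases M.A_cover b with h | h | h
          · refine Set.Finite.subset (Set.finite_singleton (M.f b w)) ?_
            intro y hy
            rw [M.Gr_A0 b h] at hy
            exact hy.2
          · refine Set.Finite.subset Set.finite_empty ?_
            intro y hy
            rw [M.Gr_A12 b (Or.inl h)] at hy
            obtain ⟨p, hp, hD⟩ := M.D_A12 b (Or.inl h)
            exfalso
            apply hA1w
            refine ⟨b, h, ?_⟩
            have hwp : w = p := by
              have h1 := hy.1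
              rwa [hD, Set.mem_singleton_iff] at h1
            rw [hD, hwp]
          · obtain ⟨r, hrP, hRb⟩ := M.R_A2 b h
            refine Set.Finite.subset (Set.finite_singleton r) ?_
            intro y hy
            rw [M.Gr_A12 b (Or.inr h), hRb] at hy
            exact hy.2
        have hO1 : IsOpen ((FW \ {w'})ᶜ) :=
          (hFWfin.subset Set.diff_subset).isClosed.isOpen_compl
        refine ⟨d, ?_, Set.univ ×ˢ (FW \ {w'})ᶜ, isOpen_univ.prod hO1, ?_⟩
        · refine M.lang_snoc ⟨z, hz, m0, hzv⟩ d (fun k => z (m0 + (ℓ+1) + k))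
            (by show z (m0 + (ℓ+1) + 0) = z (m0 + (ℓ+1)); rw [Nat.add_zero]) ?_ ?_
          · rw [hvlz]
            have h := hz (m0 + ℓ)
            rwa [show m0 + ℓ + 1 = m0 + (ℓ+1) by omega] at h
          · intro k
            have h := hz (m0 + (ℓ+1) + k)
            rwa [show m0 + (ℓ+1) + k + 1 = m0 + (ℓ+1) + (k+1) by omega] at h
        · intro x hx hsl
          have hx1 : x ⟨ℓ+1, by omega⟩ = w := hlastw x hsl
          have hGFp : (x ⟨ℓ+1, by omega⟩, x ⟨ℓ+2, by omega⟩) ∈ M.GF := hpair x hx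
          have hx2FW : x ⟨ℓ+2, by omega⟩ ∈ FW := by
            rw [hFWdef, Set.mem_setOf_eq, ← hx1]
            exact hGFp
          rw [M.G0_A2 d hdA2', M.Gr_A12 d (Or.inr hdA2'), hDd, hRd]
          constructor
          · rintro ⟨-, h2⟩
            have hx2 : x ⟨ℓ+2, by omega⟩ = w' := by
              by_contra hne
              exact h2 ⟨hx2FW, hne⟩
            exact ⟨by rw [hx1]; exact Set.mem_singleton _,
              by rw [hx2]; exact Set.mem_singleton _⟩
          · rintro ⟨-, h2⟩
            rw [Set.mem_singleton_iff] at h2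
            refine ⟨Set.mem_univ _, fun hmem => hmem.2 h2⟩
    · -- the last letter is in A₀ ∪ A₁ : extend by an A₀ symbol
      have hc01 : c ∈ M.A0 ∪ M.A1 := by
        rcases M.A_cover c with h | h | h
        exacts [Or.inl h, Or.inr h, absurd h hc2]
      obtain ⟨a, haA0, haR⟩ := M.exists_succ_A0 hc01
      obtain ⟨O, hOopen, hsubO, hback⟩ := M.exists_open_A0 hpp haA0
      refine ⟨a, ?_, O, hOopen, ?_⟩
      · exact M.lang_snoc hvL a (fun k => (M.succA)^[k] a) rfl haR
          (fun k => (M.chain_spec (Or.inl haA0) k).2)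
      · intro x hx _
        exact ⟨fun h => hback _ (hpair x hx) h, fun h => hsubO h⟩
  obtain ⟨a, haL, O, hOopen, hOiff⟩ := key
  refine ⟨a, haL, ?_⟩
  obtain ⟨V, hVopen, hVeq⟩ := isOpen_induced_iff.mp hvO
  rw [isOpen_induced_iff]
  refine ⟨(fun x : Fin (ℓ+3) → ℝ => Fin.init x) ⁻¹' V ∩
    (fun x : Fin (ℓ+3) → ℝ => (x ⟨ℓ+1, by omega⟩, x ⟨ℓ+2, by omega⟩)) ⁻¹' O, ?_, ?_⟩
  · apply IsOpen.inter
    · apply hVopen.preimage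
      unfold Fin.init
      exact continuous_pi fun i => continuous_apply _
    · exact hOopen.preimage ((continuous_apply (⟨ℓ+1, by omega⟩ : Fin (ℓ+3))).prodMk (continuous_apply (⟨ℓ+2, by omega⟩ : Fin (ℓ+3))))
  · ext x
    have hxF : Fin.init x.1 ∈ M.finTraj (ℓ+2) := M.init_mem_finTraj x.2
    have hVx := Set.ext_iff.mp hVeq ⟨Fin.init x.1, hxF⟩
    simp only [Set.mem_preimage, Set.mem_setOf_eq] at hVx
    simp only [Set.mem_preimage, Set.mem_inter_iff, Set.mem_setOf_eq]
    rw [M.specialLabeled_snoc x.1 v a, hVx]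
    constructor
    · rintro ⟨h1, h2⟩
      exact ⟨h1, (hOiff x.1 x.2 h1).mp h2⟩
    · rintro ⟨h1, h2⟩
      exact ⟨h1, (hOiff x.1 x.2 h1).mpr h2⟩

end MarkovMultiMap

/-- Every essential word extends to an essential word of any greater length. -/
theorem stmt10 (M : MarkovMultiMap) (hpp : M.ProperlyParametrized)
    (n : ℕ) (u : Fin (n + 1) → M.A) (hu : M.EssentialWord u) :
    ∀ m : ℕ, n ≤ m → ∃ v : Fin (m + 1) → M.A, M.EssentialWord v ∧
      ∃ j : ℕ, ∃ h : j + n ≤ m,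
        ∀ i : Fin (n + 1), v ⟨j + (i : ℕ), by have := i.isLt; omega⟩ = u i := by
  intro m hm
  induction m, hm using Nat.le_induction with
  | base =>
    refine ⟨u, hu, 0, by omega, fun i => ?_⟩
    congr 1
    apply Fin.ext
    simp
  | succ m hm ih =>
    obtain ⟨v, hv, j, hj, hsub⟩ := ih
    obtain ⟨a, hva⟩ := M.essential_step hpp hv
    refine ⟨Fin.snoc v a, hva, j, by omega, fun i => ?_⟩
    have hji : j + (i : ℕ) < m + 1 := by have := i.isLt; omega
    rw [snoc_mk_lt v a hji (by omega)]
    exact hsub i
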